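/- Let β : ℤ → ℂ be finitely supported, let h, g : (0,∞) → ℝ be measurable with ∫₀^∞ |h(ρ) g(ρ)| ρ dρ < ∞, and let k ∈ ℝ² \ {0}. Consider the divergence free wavelet ψ̂(ξ) = −i (Σ_n β_n e^{i n θ_ξ}) h(|ξ|) e_θ(ξ) and the divergence free scaling function translate φ̂_k(ξ) = −i g(|ξ|) e^{−i⟨ξ,k⟩} e_θ(ξ), with e_θ(ξ) = (ξ₂, −ξ₁)/|ξ|. Then the filter tap has the closed form ⟨ψ̂, φ̂_k⟩_{L²(ℝ²,ℂ²)} = 2π Σ_n i^n β_n e^{i n θ_k} ∫₀^∞ h(ρ) g(ρ) J_n(ρ|k|) ρ dρ, where θ_k is the polar angle of k and J_n(z) = (1/2π) ∫₀^{2π} e^{i(z sin φ − n φ)} dφ. -/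

import Mathlib

set_option maxHeartbeats 1000000


open MeasureTheory RealInnerProductSpace

/-- The Bessel function of the first kind of integer order `n`. -/
noncomputable def besselJ (n : ℤ) (z : ℝ) : ℂ :=
  (2 * Real.pi)⁻¹ • ∫ φ in (0 : ℝ)..(2 * Real.pi),
    Complex.exp (Complex.I * ((z * Real.sin φ - n * φ : ℝ) : ℂ))

/-- The angular unit vector `e_θ(ξ) = (ξ₂, -ξ₁)/|ξ|`, viewed as a complex vector. -/
noncomputable def eThetaC (ξ : EuclideanSpace ℝ (Fin 2)) : Fin 2 → ℂ :=
  ![((ξ 1 / ‖ξ‖ : ℝ) : ℂ), ((-ξ 0 / ‖ξ‖ : ℝ) : ℂ)]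

/-- The polar angle of a point in the plane. -/
noncomputable def polarAngle (v : EuclideanSpace ℝ (Fin 2)) : ℝ :=
  Complex.arg ((v 0 : ℂ) + (v 1 : ℂ) * Complex.I)

lemma hI_pow (n : ℤ) : Complex.I ^ n = Complex.exp ((n : ℂ) * (((Real.pi/2 : ℝ) : ℂ) * Complex.I)) := by
  rw [Complex.exp_int_mul]
  congr 1
  rw [Complex.exp_mul_I, ← Complex.ofReal_cos, ← Complex.ofReal_sin,
    Real.cos_pi_div_two, Real.sin_pi_div_two]
  simp

lemma ang (n : ℤ) (z a : ℝ) :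
    (∫ θ in Set.Ioo (-Real.pi) Real.pi,
      Complex.exp (Complex.I * (n : ℂ) * (θ : ℂ)) *
        Complex.exp (Complex.I * ((z * Real.cos (θ - a) : ℝ) : ℂ)))
      = (2 * Real.pi : ℂ) * Complex.I ^ n *
          Complex.exp (Complex.I * (n : ℂ) * (a : ℂ)) * besselJ n z := by
  have hper : Function.Periodic (fun θ : ℝ => Complex.exp (Complex.I * (n : ℂ) * (θ : ℂ)) *
      Complex.exp (Complex.I * ((z * Real.cos (θ - a) : ℝ) : ℂ))) (2 * Real.pi) := by
    intro θ
    have hcos : θ + 2*Real.pi - a = (θ - a) + 2*Real.pi := by ring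
    simp only [hcos, Real.cos_add_two_pi]
    rw [show Complex.I * (n : ℂ) * ((θ + 2*Real.pi : ℝ) : ℂ)
          = Complex.I * (n : ℂ) * (θ : ℂ) + (n : ℂ) * (2 * Real.pi * Complex.I) by
        push_cast; ring, Complex.exp_add, Complex.exp_int_mul_two_pi_mul_I, mul_one]
  have pi_pos := Real.pi_pos
  calc (∫ θ in Set.Ioo (-Real.pi) Real.pi,
      Complex.exp (Complex.I * (n : ℂ) * (θ : ℂ)) *
        Complex.exp (Complex.I * ((z * Real.cos (θ - a) : ℝ) : ℂ)))
      = ∫ θ in (-Real.pi)..Real.pi, Complex.exp (Complex.I * (n : ℂ) * (θ : ℂ)) *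
        Complex.exp (Complex.I * ((z * Real.cos (θ - a) : ℝ) : ℂ)) := by
        rw [intervalIntegral.integral_of_le (by linarith),
          ← MeasureTheory.integral_Ioc_eq_integral_Ioo]
    _ = ∫ θ in (a + Real.pi/2 - 2*Real.pi)..(a + Real.pi/2),
          Complex.exp (Complex.I * (n : ℂ) * (θ : ℂ)) *
            Complex.exp (Complex.I * ((z * Real.cos (θ - a) : ℝ) : ℂ)) := by
        have h1 := hper.intervalIntegral_add_eq (-Real.pi) (a + Real.pi/2 - 2*Real.pi)
        rw [show -Real.pi + 2*Real.pi = Real.pi by ring,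
          show a + Real.pi/2 - 2*Real.pi + 2*Real.pi = a + Real.pi/2 by ring] at h1
        exact h1
    _ = ∫ φ in (0:ℝ)..(2*Real.pi),
          Complex.exp (Complex.I * (n : ℂ) * ((a + Real.pi/2 - φ : ℝ) : ℂ)) *
            Complex.exp (Complex.I * ((z * Real.cos (a + Real.pi/2 - φ - a) : ℝ) : ℂ)) := by
        have h2 := intervalIntegral.integral_comp_sub_left (a := (0:ℝ)) (b := 2*Real.pi)
          (fun θ : ℝ => Complex.exp (Complex.I * (n : ℂ) * (θ : ℂ)) *
            Complex.exp (Complex.I * ((z * Real.cos (θ - a) : ℝ) : ℂ))) (a + Real.pi/2)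
        rw [sub_zero] at h2
        exact h2.symm
    _ = ∫ φ in (0:ℝ)..(2*Real.pi), Complex.I ^ n * Complex.exp (Complex.I * (n : ℂ) * (a : ℂ)) *
          Complex.exp (Complex.I * ((z * Real.sin φ - n * φ : ℝ) : ℂ)) := by
        apply intervalIntegral.integral_congr
        intro φ _
        dsimp only
        rw [show a + Real.pi/2 - φ - a = Real.pi/2 - φ by ring, Real.cos_pi_div_two_sub, hI_pow]
        rw [← Complex.exp_add, ← Complex.exp_add, ← Complex.exp_add]
        congr 1
        push_cast
        ring
    _ = (2 * Real.pi : ℂ) * Complex.I ^ n *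
          Complex.exp (Complex.I * (n : ℂ) * (a : ℂ)) * besselJ n z := by
        rw [intervalIntegral.integral_const_mul, besselJ, Complex.real_smul]
        push_cast
        have : (Real.pi : ℂ) ≠ 0 := Complex.ofReal_ne_zero.2 Real.pi_ne_zero
        field_simp

/-- Closed form of the filter taps: the `L²` inner product of the divergence free wavelet
`ψ̂(ξ) = -i (∑_n β_n e^{inθ_ξ}) h(|ξ|) e_θ(ξ)` with the divergence free scaling function
translate `φ̂_k(ξ) = -i g(|ξ|) e^{-i⟨ξ,k⟩} e_θ(ξ)` equals
`2π ∑_n i^n β_n e^{inθ_k} ∫₀^∞ h(ρ) g(ρ) J_n(ρ|k|) ρ dρ`. -/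
theorem stmt_14 (β : ℤ →₀ ℂ) (h g : ℝ → ℝ)
    (hmeas : Measurable h) (gmeas : Measurable g)
    (hint : IntegrableOn (fun ρ : ℝ => |h ρ * g ρ| * ρ) (Set.Ioi (0 : ℝ)))
    (k : EuclideanSpace ℝ (Fin 2)) (hk : k ≠ 0) :
    (∫ ξ : EuclideanSpace ℝ (Fin 2), ∑ c : Fin 2,
        (((-Complex.I) *
            (∑ n ∈ β.support, β n * Complex.exp (Complex.I * (n : ℂ) * ((polarAngle ξ : ℝ) : ℂ))) *
            ((h ‖ξ‖ : ℝ) : ℂ)) • eThetaC ξ) c *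
          (starRingEnd ℂ)
            ((((-Complex.I) * ((g ‖ξ‖ : ℝ) : ℂ) *
                Complex.exp (-(Complex.I * ((⟪ξ, k⟫ : ℝ) : ℂ)))) • eThetaC ξ) c))
      = (2 * Real.pi : ℂ) * ∑ n ∈ β.support,
          Complex.I ^ (n : ℤ) * β n *
            Complex.exp (Complex.I * (n : ℂ) * ((polarAngle k : ℝ) : ℂ)) *
            ∫ ρ in Set.Ioi (0 : ℝ),
              ((h ρ * g ρ : ℝ) : ℂ) * besselJ n (ρ * ‖k‖) * (ρ : ℂ) := by
  classical
  have pi_pos := Real.pi_pos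
  set a := polarAngle k with ha
  -- basic component facts
  have hnorm : ∀ v : EuclideanSpace ℝ (Fin 2), ‖v‖ = Real.sqrt (v 0 ^ 2 + v 1 ^ 2) := by
    intro v
    rw [EuclideanSpace.norm_eq, Fin.sum_univ_two, Real.norm_eq_abs, Real.norm_eq_abs,
      sq_abs, sq_abs]
  have hinner : ∀ v : EuclideanSpace ℝ (Fin 2), (⟪v, k⟫ : ℝ) = v 0 * k 0 + v 1 * k 1 := by
    intro v
    simp [PiLp.inner_apply, Fin.sum_univ_two, RCLike.inner_apply, mul_comm]
  -- polar facts for k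
  have habs : ‖((k 0 : ℂ) + (k 1 : ℂ) * Complex.I)‖ = ‖k‖ := by
    rw [Complex.norm_add_mul_I, hnorm]
  have hKpol := Complex.norm_mul_cos_add_sin_mul_I ((k 0 : ℂ) + (k 1 : ℂ) * Complex.I)
  rw [habs] at hKpol
  have hK0 : k 0 = ‖k‖ * Real.cos a := by
    have := congrArg Complex.re hKpol
    simpa [ha, polarAngle, Complex.mul_re, Complex.add_re, Complex.add_im, ← Complex.ofReal_cos,
      ← Complex.ofReal_sin] using this.symm
  have hK1 : k 1 = ‖k‖ * Real.sin a := by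
    have := congrArg Complex.im hKpol
    simpa [ha, polarAngle, Complex.mul_im, Complex.add_re, Complex.add_im, ← Complex.ofReal_cos,
      ← Complex.ofReal_sin] using this.symm
  -- pointwise simplification of the integrand
  have hpoint : ∀ ξ : EuclideanSpace ℝ (Fin 2), ξ ≠ 0 →
      (∑ c : Fin 2,
        (((-Complex.I) *
            (∑ n ∈ β.support, β n * Complex.exp (Complex.I * (n : ℂ) * ((polarAngle ξ : ℝ) : ℂ))) *
            ((h ‖ξ‖ : ℝ) : ℂ)) • eThetaC ξ) c *
          (starRingEnd ℂ)
            ((((-Complex.I) * ((g ‖ξ‖ : ℝ) : ℂ) *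
                Complex.exp (-(Complex.I * ((⟪ξ, k⟫ : ℝ) : ℂ)))) • eThetaC ξ) c))
      = (∑ n ∈ β.support, β n * Complex.exp (Complex.I * (n : ℂ) * ((polarAngle ξ : ℝ) : ℂ))) *
          ((h ‖ξ‖ * g ‖ξ‖ : ℝ) : ℂ) * Complex.exp (Complex.I * ((⟪ξ, k⟫ : ℝ) : ℂ)) := by
    intro ξ hξ
    have hr : ‖ξ‖ ≠ 0 := norm_ne_zero_iff.2 hξ
    have hsq : ξ 0 ^ 2 + ξ 1 ^ 2 = ‖ξ‖ ^ 2 := by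
      rw [hnorm ξ, Real.sq_sqrt (by positivity)]
    have hunit : (((ξ 1 / ‖ξ‖ : ℝ) : ℂ)) * ((ξ 1 / ‖ξ‖ : ℝ) : ℂ) +
        (((-ξ 0 / ‖ξ‖ : ℝ) : ℂ)) * ((-ξ 0 / ‖ξ‖ : ℝ) : ℂ) = 1 := by
      have hre : (ξ 1 / ‖ξ‖) * (ξ 1 / ‖ξ‖) + (-ξ 0 / ‖ξ‖) * (-ξ 0 / ‖ξ‖) = 1 := by
        field_simp
        linear_combination hsq
      rw [← Complex.ofReal_mul, ← Complex.ofReal_mul, ← Complex.ofReal_add, hre, Complex.ofReal_one]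
    simp only [Fin.sum_univ_two, eThetaC, Pi.smul_apply, smul_eq_mul, Matrix.cons_val_zero,
      Matrix.cons_val_one, Matrix.head_cons, map_mul, map_neg, Complex.conj_I,
      Complex.conj_ofReal, ← Complex.exp_conj]
    rw [show (-(-Complex.I * ((⟪ξ, k⟫ : ℝ) : ℂ))) = Complex.I * ((⟪ξ, k⟫ : ℝ) : ℂ) by ring]
    push_cast at hunit ⊢
    linear_combination ((-Complex.I * Complex.I) * ((∑ n ∈ β.support, β n *
        Complex.exp (Complex.I * (n : ℂ) * ((polarAngle ξ : ℝ) : ℂ))) *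
      ((h ‖ξ‖ : ℝ) : ℂ) * ((g ‖ξ‖ : ℝ) : ℂ) *
      Complex.exp (Complex.I * ((⟪ξ, k⟫ : ℝ) : ℂ)))) * hunit -
      ((∑ n ∈ β.support, β n *
        Complex.exp (Complex.I * (n : ℂ) * ((polarAngle ξ : ℝ) : ℂ))) *
      ((h ‖ξ‖ : ℝ) : ℂ) * ((g ‖ξ‖ : ℝ) : ℂ) *
      Complex.exp (Complex.I * ((⟪ξ, k⟫ : ℝ) : ℂ))) * Complex.I_mul_I
  -- measurable equivalence with ℝ × ℝ
  set em : EuclideanSpace ℝ (Fin 2) ≃ᵐ ℝ × ℝ :=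
    (MeasurableEquiv.toLp 2 (Fin 2 → ℝ)).symm.trans MeasurableEquiv.finTwoArrow with hem
  have hmp1 : MeasurePreserving (⇑em) volume volume := by
    exact (volume_preserving_finTwoArrow ℝ).comp
      (EuclideanSpace.volume_preserving_symm_measurableEquiv_toLp (Fin 2))
  have hmp : MeasurePreserving (⇑em.symm) volume volume := MeasurePreserving.symm em hmp1
  have hv0 : ∀ p : ℝ × ℝ, (em.symm p) 0 = p.1 := fun p => rfl
  have hv1 : ∀ p : ℝ × ℝ, (em.symm p) 1 = p.2 := fun p => rfl
  -- the polar-coordinates integrand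
  set T : ℤ → ℝ × ℝ → ℂ := fun n p =>
      ((p.1 : ℂ) * β n * ((h p.1 * g p.1 : ℝ) : ℂ)) *
        (Complex.exp (Complex.I * (n : ℂ) * (p.2 : ℂ)) *
          Complex.exp (Complex.I * ((p.1 * ‖k‖ * Real.cos (p.2 - a) : ℝ) : ℂ))) with hT
  have hTmeas : ∀ n : ℤ, Measurable (T n) := by
    intro n
    apply Measurable.mul
    · apply Measurable.mul
      · exact (Complex.measurable_ofReal.comp measurable_fst).mul measurable_const
      · exact Complex.measurable_ofReal.comp
          ((hmeas.comp measurable_fst).mul (gmeas.comp measurable_fst))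
    · apply Measurable.mul
      · exact Complex.measurable_exp.comp
          (measurable_const.mul (Complex.measurable_ofReal.comp measurable_snd))
      · exact Complex.measurable_exp.comp (measurable_const.mul
          (Complex.measurable_ofReal.comp ((measurable_fst.mul measurable_const).mul
            (Real.continuous_cos.measurable.comp (measurable_snd.sub measurable_const)))))
  have hbd : ∀ n : ℤ, Integrable (fun p : ℝ × ℝ => ‖β n‖ * (|h p.1 * g p.1| * p.1))
      ((volume.restrict (Set.Ioi (0:ℝ))).prod (volume.restrict (Set.Ioo (-Real.pi) Real.pi))) := by
    intro n
    have h1 : Integrable (fun ρ : ℝ => ‖β n‖ * (|h ρ * g ρ| * ρ))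
        (volume.restrict (Set.Ioi (0:ℝ))) := hint.const_mul _
    have h2 : Integrable (fun _ : ℝ => (1:ℝ))
        (volume.restrict (Set.Ioo (-Real.pi) Real.pi)) :=
      integrableOn_const measure_Ioo_lt_top.ne
    simpa using h1.mul_prod h2
  have hTint : ∀ n : ℤ, IntegrableOn (T n)
      (Set.Ioi (0:ℝ) ×ˢ Set.Ioo (-Real.pi) Real.pi) := by
    intro n
    rw [IntegrableOn, Measure.volume_eq_prod, ← Measure.prod_restrict]
    apply Integrable.mono' (hbd n) (hTmeas n).aestronglyMeasurable
    rw [Measure.prod_restrict]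
    filter_upwards [ae_restrict_mem (measurableSet_Ioi.prod measurableSet_Ioo)] with p hp
    obtain ⟨hp1, hp2⟩ := hp
    apply le_of_eq
    simp only [hT, norm_mul, Complex.norm_real, Real.norm_eq_abs, Complex.norm_exp]
    have e1 : (Complex.I * (n:ℂ) * ((p.2:ℝ):ℂ)).re = 0 := by
      simp [Complex.mul_re]
    have e2 : (Complex.I * ((p.1 * ‖k‖ * Real.cos (p.2 - a) : ℝ):ℂ)).re = 0 := by
      rw [Complex.mul_re]
      simp only [Complex.I_re, Complex.ofReal_re, Complex.I_im, Complex.ofReal_im]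
      ring
    rw [e1, e2, Real.exp_zero, abs_of_pos (Set.mem_Ioi.1 hp1), abs_mul]
    ring
  -- main computation
  rw [← hmp.integral_comp em.symm.measurableEmbedding, ← integral_comp_polarCoord_symm,
    polarCoord_target]
  have hstep : (∫ p in Set.Ioi (0:ℝ) ×ˢ Set.Ioo (-Real.pi) Real.pi,
      p.1 • (fun ξ : EuclideanSpace ℝ (Fin 2) => ∑ c : Fin 2,
        (((-Complex.I) *
            (∑ n ∈ β.support, β n * Complex.exp (Complex.I * (n : ℂ) * ((polarAngle ξ : ℝ) : ℂ))) *
            ((h ‖ξ‖ : ℝ) : ℂ)) • eThetaC ξ) c *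
          (starRingEnd ℂ)
            ((((-Complex.I) * ((g ‖ξ‖ : ℝ) : ℂ) *
                Complex.exp (-(Complex.I * ((⟪ξ, k⟫ : ℝ) : ℂ)))) • eThetaC ξ) c))
        (em.symm (polarCoord.symm p)))
      = ∫ p in Set.Ioi (0:ℝ) ×ˢ Set.Ioo (-Real.pi) Real.pi, ∑ n ∈ β.support, T n p := by
    apply setIntegral_congr_fun (measurableSet_Ioi.prod measurableSet_Ioo)
    rintro ⟨ρ, θ⟩ ⟨hρ, hθ⟩
    simp only [polarCoord_symm_apply]
    have hρ' : (0:ℝ) < ρ := hρ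
    set v : EuclideanSpace ℝ (Fin 2) := em.symm (ρ * Real.cos θ, ρ * Real.sin θ) with hv
    have hvnorm : ‖v‖ = ρ := by
      have hsq : (ρ * Real.cos θ) ^ 2 + (ρ * Real.sin θ) ^ 2 = ρ ^ 2 := by
        nlinarith [Real.sin_sq_add_cos_sq θ]
      rw [hnorm, hv, hv0, hv1, hsq, Real.sqrt_sq hρ'.le]
    have hvne : v ≠ 0 := by
      intro h0
      rw [h0, norm_zero] at hvnorm
      exact (ne_of_gt hρ') hvnorm.symm
    have hvarg : polarAngle v = θ := by
      show Complex.arg (((v 0 : ℝ) : ℂ) + ((v 1 : ℝ) : ℂ) * Complex.I) = θ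
      have hrw : (((v 0 : ℝ) : ℂ) + ((v 1 : ℝ) : ℂ) * Complex.I)
          = (ρ : ℂ) * (Complex.cos (θ:ℂ) + Complex.sin (θ:ℂ) * Complex.I) := by
        rw [hv, hv0, hv1]
        push_cast
        ring
      rw [hrw]
      exact Complex.arg_mul_cos_add_sin_mul_I hρ' ⟨hθ.1, hθ.2.le⟩
    have hvip : (⟪v, k⟫ : ℝ) = ρ * ‖k‖ * Real.cos (θ - a) := by
      rw [hinner, hv, hv0, hv1, hK0, hK1, Real.cos_sub]
      ring
    rw [hpoint v hvne, hvarg, hvnorm, hvip, Complex.real_smul]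
    simp only [hT]
    rw [Finset.sum_mul, Finset.sum_mul, Finset.mul_sum]
    apply Finset.sum_congr rfl
    intro n _
    ring
  rw [hstep, integral_finset_sum _ (fun n _ => hTint n), Finset.mul_sum]
  apply Finset.sum_congr rfl
  intro n _
  have hTint' : IntegrableOn (T n) (Set.Ioi (0:ℝ) ×ˢ Set.Ioo (-Real.pi) Real.pi)
      (volume.prod volume) := by
    rw [← Measure.volume_eq_prod]; exact hTint n
  rw [Measure.volume_eq_prod, setIntegral_prod _ hTint']
  have hout : (∫ ρ in Set.Ioi (0:ℝ), ∫ θ in Set.Ioo (-Real.pi) Real.pi, T n (ρ, θ))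
      = ∫ ρ in Set.Ioi (0:ℝ), ((2 * Real.pi : ℂ) * Complex.I ^ n *
          Complex.exp (Complex.I * (n : ℂ) * (a : ℂ)) * β n) *
            (((h ρ * g ρ : ℝ) : ℂ) * besselJ n (ρ * ‖k‖) * (ρ : ℂ)) := by
    apply setIntegral_congr_fun measurableSet_Ioi
    intro ρ _
    simp only [hT]
    rw [integral_const_mul, ang n (ρ * ‖k‖) a]
    ring
  rw [hout, integral_const_mul]
  ring
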